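/- Let R be a 3×3 completely-S matrix that is invertible, and let θ ∈ ℝ³ satisfy R⁻¹θ < 0 componentwise. If (u, v) is a divergent solution of LCP(θ,R) (i.e., a solution with v ≠ 0), and m and n denote the numbers of strictly positive components of u and v respectively, then (m, n) is one of (1,2), (2,1), (1,1). -/

import Mathlib

open Matrix

/-- `(u, v)` is a solution of the linear complementarity problem LCP(θ, R). -/
def IsLCPSolution {d : ℕ} (θ : Fin d → ℝ) (R : Matrix (Fin d) (Fin d) ℝ)
    (u v : Fin d → ℝ) : Prop :=
  (∀ i, 0 ≤ u i) ∧ (∀ i, 0 ≤ v i) ∧ v = θ + R.mulVec u ∧ u ⬝ᵥ v = 0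

/-- `R` is a completely-S matrix: every principal submatrix of `R` is an S-matrix. -/
def CompletelyS {d : ℕ} (R : Matrix (Fin d) (Fin d) ℝ) : Prop :=
  ∀ s : Finset (Fin d), s.Nonempty →
    ∃ w : Fin d → ℝ, (∀ i, 0 ≤ w i) ∧ (∀ i, i ∉ s → w i = 0) ∧
      ∀ i ∈ s, 0 < R.mulVec w i

private lemma mulVec_sub_smul {d : ℕ} (R : Matrix (Fin d) (Fin d) ℝ)
    (c : ℝ) (x y : Fin d → ℝ) (i : Fin d) :
    R.mulVec (fun k => x k - c * y k) i = R.mulVec x i - c * R.mulVec y i := by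
  simp only [Matrix.mulVec, dotProduct, mul_sub, Finset.sum_sub_distrib,
    Finset.mul_sum]
  congr 1
  exact Finset.sum_congr rfl fun j _ => by ring

/-- Key lemma: if `R` is completely-S, there is no vector `a ≥ 0` whose support
is exactly a nonempty set `s` with `(R a) i ≤ 0` for all `i ∈ s`. -/
private lemma key {d : ℕ} (R : Matrix (Fin d) (Fin d) ℝ) (hS : CompletelyS R)
    (s : Finset (Fin d)) :
    ∀ a : Fin d → ℝ, (∀ i, 0 ≤ a i) → (∀ i, a i ≠ 0 → i ∈ s) →
      (∀ i ∈ s, 0 < a i) → s.Nonempty → (∀ i ∈ s, R.mulVec a i ≤ 0) → False := by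
  induction s using Finset.strongInduction with
  | _ s ih =>
    intro a ha0 hasupp hapos hne hRa
    obtain ⟨w, hw0, hwsupp, hwpos⟩ := hS s hne
    have hwmem : ∀ i, 0 < w i → i ∈ s := by
      intro i hi
      by_contra h
      rw [hwsupp i h] at hi
      exact lt_irrefl 0 hi
    -- w is not identically zero
    have hwne : ∃ i, 0 < w i := by
      by_contra h
      push_neg at h
      have hw : w = 0 := by
        funext i
        exact le_antisymm (h i) (hw0 i)
      obtain ⟨i0, hi0⟩ := hne
      have := hwpos i0 hi0
      rw [hw] at this
      simp [Matrix.mulVec_zero] at this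
    set T : Finset (Fin d) := Finset.univ.filter (fun i => 0 < w i) with hT
    have hTne : T.Nonempty := by
      obtain ⟨i, hi⟩ := hwne
      exact ⟨i, by simp [hT, hi]⟩
    obtain ⟨j, hjT, hj⟩ := Finset.exists_mem_eq_inf' hTne (fun i => a i / w i)
    set μ : ℝ := T.inf' hTne (fun i => a i / w i) with hμ
    have hjw : 0 < w j := by
      simpa [hT] using hjT
    have hjs : j ∈ s := hwmem j hjw
    have hμpos : 0 < μ := by
      rw [hj]
      exact div_pos (hapos j hjs) hjw
    have hμle : ∀ i, 0 < w i → μ * w i ≤ a i := by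
      intro i hi
      have hiT : i ∈ T := by simp [hT, hi]
      have := Finset.inf'_le (fun i => a i / w i) hiT
      rw [← hμ] at this
      calc μ * w i ≤ (a i / w i) * w i := by
            exact mul_le_mul_of_nonneg_right this (le_of_lt hi)
        _ = a i := by field_simp
    set q : Fin d → ℝ := fun i => a i - μ * w i with hq
    have hq0 : ∀ i, 0 ≤ q i := by
      intro i
      rcases lt_or_ge 0 (w i) with h | h
      · have := hμle i h
        simp only [hq]
        linarith
      · have hwi : w i = 0 := le_antisymm h (hw0 i)
        simp only [hq, hwi, mul_zero, sub_zero]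
        exact ha0 i
    have hqj : q j = 0 := by
      simp only [hq, hj]
      field_simp
      ring
    have hqsupp : ∀ i, q i ≠ 0 → i ∈ s := by
      intro i hi
      by_contra h
      have hai : a i = 0 := by
        by_contra h'
        exact h (hasupp i h')
      have hwi : w i = 0 := hwsupp i h
      simp [hq, hai, hwi] at hi
    have hRq : ∀ i ∈ s, R.mulVec q i < 0 := by
      intro i hi
      have : R.mulVec q i = R.mulVec a i - μ * R.mulVec w i :=
        mulVec_sub_smul R μ a w i
      rw [this]
      have h1 := hRa i hi
      have h2 := hwpos i hi
      nlinarith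
    set s' : Finset (Fin d) := s.filter (fun i => q i ≠ 0) with hs'
    rcases s'.eq_empty_or_nonempty with hempty | hne'
    · -- q = 0 on s, but R q < 0 on s; in fact q = 0 everywhere
      have hqzero : q = 0 := by
        funext i
        simp only [Pi.zero_apply]
        by_contra h
        have histop : i ∈ s := hqsupp i h
        have : i ∈ s' := by simp [hs', histop, h]
        rw [hempty] at this
        exact absurd this (Finset.notMem_empty i)
      obtain ⟨i0, hi0⟩ := hne
      have := hRq i0 hi0
      rw [hqzero] at this
      simp [Matrix.mulVec_zero] at this
    · -- recurse on strictly smaller support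
      have hsub : s' ⊂ s := by
        refine Finset.ssubset_iff_of_subset (Finset.filter_subset _ _) |>.mpr ?_
        exact ⟨j, hjs, by simp [hs', hqj]⟩
      refine ih s' hsub q hq0 ?_ ?_ hne' ?_
      · intro i hi
        simp [hs', hqsupp i hi, hi]
      · intro i hi
        have : q i ≠ 0 := by
          simp only [hs', Finset.mem_filter] at hi
          exact hi.2
        exact lt_of_le_of_ne (hq0 i) (Ne.symm this)
      · intro i hi
        have : i ∈ s := (Finset.filter_subset _ _) hi
        exact le_of_lt (hRq i this)

theorem stmt4 (R : Matrix (Fin 3) (Fin 3) ℝ) (hS : CompletelyS R)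
    (hR : IsUnit R.det) (θ : Fin 3 → ℝ) (hθ : ∀ i, R⁻¹.mulVec θ i < 0)
    (u v : Fin 3 → ℝ) (hsol : IsLCPSolution θ R u v) (hdiv : v ≠ 0)
    (m n : ℕ)
    (hm : m = (Finset.univ.filter fun i => 0 < u i).card)
    (hn : n = (Finset.univ.filter fun i => 0 < v i).card) :
    (m, n) = (1, 2) ∨ (m, n) = (2, 1) ∨ (m, n) = (1, 1) := by
  obtain ⟨hu0, hv0, hveq, hcompl⟩ := hsol
  -- complementarity pointwise
  have hcompl' : ∀ i, u i * v i = 0 := by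
    have hsum : ∑ i, u i * v i = 0 := hcompl
    intro i
    have hnn : ∀ i ∈ Finset.univ, 0 ≤ u i * v i := fun i _ =>
      mul_nonneg (hu0 i) (hv0 i)
    exact (Finset.sum_eq_zero_iff_of_nonneg hnn).mp hsum i (Finset.mem_univ i)
  have hdisj : Disjoint (Finset.univ.filter fun i => 0 < u i)
      (Finset.univ.filter fun i => 0 < v i) := by
    rw [Finset.disjoint_left]
    intro i hi hj
    simp only [Finset.mem_filter] at hi hj
    have := hcompl' i
    nlinarith [hi.2, hj.2]
  -- m + n ≤ 3
  have hmn3 : m + n ≤ 3 := by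
    rw [hm, hn, ← Finset.card_union_of_disjoint hdisj]
    calc _ ≤ (Finset.univ : Finset (Fin 3)).card := Finset.card_le_univ _
      _ = 3 := by simp
  -- n ≥ 1
  have hn1 : 1 ≤ n := by
    rw [hn]
    rw [Nat.one_le_iff_ne_zero, Ne, Finset.card_eq_zero, ← Ne,
      ← Finset.nonempty_iff_ne_empty]
    have : ∃ i, v i ≠ 0 := by
      by_contra h
      push_neg at h
      exact hdiv (funext h)
    obtain ⟨i, hi⟩ := this
    exact ⟨i, by simp [lt_of_le_of_ne (hv0 i) (Ne.symm hi)]⟩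
  -- m ≥ 1 : otherwise u = 0 and the key lemma gives a contradiction
  have hm1 : 1 ≤ m := by
    by_contra h
    push_neg at h
    interval_cases m
    have hfil : (Finset.univ.filter fun i => 0 < u i) = ∅ :=
      Finset.card_eq_zero.mp hm.symm
    have huz : u = 0 := by
      funext i
      by_contra h'
      have hpos : 0 < u i := lt_of_le_of_ne (hu0 i) (Ne.symm h')
      have : i ∈ (Finset.univ.filter fun i => 0 < u i) := by simp [hpos]
      rw [hfil] at this
      exact absurd this (Finset.notMem_empty i)
    have hvθ : v = θ := by
      rw [hveq, huz]
      simp [Matrix.mulVec_zero]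
    -- apply key lemma with a = -(R⁻¹θ)
    set a : Fin 3 → ℝ := -(R⁻¹.mulVec θ) with ha
    have hapos : ∀ i, 0 < a i := fun i => by
      simp only [ha, Pi.neg_apply]
      linarith [hθ i]
    have hRa : ∀ i, R.mulVec a i = -(θ i) := by
      have h1 : R.mulVec (R⁻¹.mulVec θ) = θ := by
        rw [Matrix.mulVec_mulVec, Matrix.mul_nonsing_inv _ hR, Matrix.one_mulVec]
      intro i
      rw [ha, Matrix.mulVec_neg, h1, Pi.neg_apply]
    refine key R hS Finset.univ a (fun i => le_of_lt (hapos i))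
      (fun i _ => Finset.mem_univ i) (fun i _ => hapos i)
      Finset.univ_nonempty ?_
    intro i _
    rw [hRa i]
    have : 0 ≤ θ i := by
      have := hv0 i
      rwa [hvθ] at this
    linarith
  -- m ≤ 2 from m + n ≤ 3 and n ≥ 1; enumerate
  simp only [Prod.mk.injEq]
  omega
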